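/- Let (G_p) be a family of groups with multiplication satisfying the intersection axiom. For any n ≥ 2 and 1 ≤ q_0,...,q_{r+1} with q_0+...+q_{r+1} = n, the intersection over i = 0,...,r of the subgroups G_{q_0+...+q_i} × G_{q_{i+1}+...+q_{r+1}} of G_n equals G_{q_0} × G_{q_1} × ... × G_{q_{r+1}}. -/

import Mathlib

universe u

/-- A family of groups with multiplication (see Definition 2.1 of the paper). -/
structure GroupFamily where
  G : ℕ → Type u
  [grp : ∀ p, Group (G p)]
  mul : ∀ {p q : ℕ}, G p → G q → G (p + q)
  unit : Subsingleton (G 0)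
  mul_one : ∀ {p : ℕ} (g : G p), mul g (1 : G 0) = g
  one_mul : ∀ {p : ℕ} (g : G p), HEq (mul (1 : G 0) g) g
  assoc : ∀ {p q r : ℕ} (g : G p) (h : G q) (k : G r),
    HEq (mul (mul g h) k) (mul g (mul h k))
  comm : ∀ (p q : ℕ), ∃ τ : G (p + q), ∀ (g : G p) (h : G q),
    HEq (τ * mul g h * τ⁻¹) (mul h g)
  inj : ∀ (p q : ℕ), Function.Injective (fun gh : G p × G q => mul gh.1 gh.2)
  /-- The intersection axiom. -/
  inter : ∀ (p q r : ℕ) (x : G (p + q + r)),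
    ((∃ (a : G (p + q)) (b : G r), x = mul a b) ∧
      (∃ (c : G p) (d : G (q + r)),
        x = cast (congrArg G (Nat.add_assoc p q r)).symm (mul c d))) ↔
    ∃ (a : G p) (b : G q) (c : G r), x = mul (mul a b) c

attribute [instance] GroupFamily.grp

/-- The subgroup (as a subset) `G a × G b ⊆ G n`, for `a + b = n`. -/
def GroupFamily.splitSet (F : GroupFamily) (n a b : ℕ) : Set (F.G n) :=
  {x | ∃ (g : F.G a) (h : F.G b) (e : a + b = n), x = cast (congrArg F.G e) (F.mul g h)}

/-- The iterated product subgroup (as a subset)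
`G q₀ × G q₁ × ⋯ × G q_r ⊆ G (q₀ + ⋯ + q_r)` for a list `l = [q₀, ..., q_r]`. -/
def GroupFamily.iterMulSet (F : GroupFamily) : (l : List ℕ) → Set (F.G l.sum)
  | [] => {1}
  | q :: l => {x | ∃ (a : F.G q) (y : F.G l.sum) (e : q + l.sum = (q :: l).sum),
      y ∈ F.iterMulSet l ∧ x = cast (congrArg F.G e) (F.mul a y)}

namespace GroupFamily

variable (F : GroupFamily.{u})

lemma hmul_congr {p p' q q' : ℕ} (hp : p = p') (hq : q = q')
    {a : F.G p} {a' : F.G p'} {b : F.G q} {b' : F.G q'}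
    (ha : HEq a a') (hb : HEq b b') : HEq (F.mul a b) (F.mul a' b') := by
  subst hp; subst hq
  rw [eq_of_heq ha, eq_of_heq hb]

lemma hinj {p q p' q' : ℕ} (hp : p = p') (hq : q = q')
    {a : F.G p} {b : F.G q} {a' : F.G p'} {b' : F.G q'}
    (h : HEq (F.mul a b) (F.mul a' b')) : HEq a a' ∧ HEq b b' := by
  subst hp; subst hq
  have h2 := F.inj p q (eq_of_heq h : (fun gh : F.G p × F.G q => F.mul gh.1 gh.2) (a, b)
      = (fun gh : F.G p × F.G q => F.mul gh.1 gh.2) (a', b'))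
  exact ⟨heq_of_eq (congrArg Prod.fst h2), heq_of_eq (congrArg Prod.snd h2)⟩

lemma hinter {p q r : ℕ} {x : F.G (p + q + r)}
    (h1 : ∃ (a : F.G (p + q)) (b : F.G r), x = F.mul a b)
    (h2 : ∃ (c : F.G p) (d : F.G (q + r)), HEq x (F.mul c d)) :
    ∃ (a : F.G p) (b : F.G q) (c : F.G r), x = F.mul (F.mul a b) c := by
  rw [← F.inter p q r x]
  refine ⟨h1, ?_⟩
  obtain ⟨c, d, h⟩ := h2
  exact ⟨c, d, eq_of_heq (h.trans (cast_heq _ _).symm)⟩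

lemma split_of_iter : ∀ (l : List ℕ) (k : ℕ) (y : F.G l.sum), y ∈ F.iterMulSet l →
    ∃ (a : F.G (l.take k).sum) (b : F.G (l.drop k).sum), HEq y (F.mul a b) := by
  intro l
  induction l with
  | nil =>
    intro k y hy
    cases k <;>
    · refine ⟨1, 1, ?_⟩
      rw [hy]
      exact heq_of_eq (show (1 : F.G 0) = F.mul (1 : F.G 0) (1 : F.G 0) from
        @Subsingleton.elim _ F.unit _ _)
  | cons q l ih =>
    intro k y hy
    obtain ⟨a, y', e, hy', hx⟩ := hy
    have hyy : HEq y (F.mul a y') := heq_of_eq_cast _ hx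
    match k with
    | 0 =>
      exact ⟨1, y, (F.one_mul y).symm⟩
    | k + 1 =>
      obtain ⟨a', b', h'⟩ := ih k y' hy'
      refine ⟨F.mul a a', b', ?_⟩
      have h1 : HEq (F.mul a y') (F.mul a (F.mul a' b')) :=
        F.hmul_congr rfl (by rw [← List.sum_take_add_sum_drop l k]) (HEq.refl a) h'
      exact (hyy.trans h1).trans (F.assoc a a' b').symm


lemma main : ∀ (l : List ℕ) (x : F.G l.sum),
    (∀ k, 1 ≤ k → k < l.length →
        x ∈ F.splitSet l.sum ((l.take k).sum) ((l.drop k).sum)) ↔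
      x ∈ F.iterMulSet l := by
  intro l
  induction l with
  | nil =>
    intro x
    constructor
    · intro _
      exact @Subsingleton.elim _ F.unit x 1
    · intro hx k hk1 hk2
      simp at hk2
  | cons q l ih =>
    intro x
    constructor
    · intro H
      cases l with
      | nil =>
        refine ⟨x, 1, rfl, rfl, ?_⟩
        exact (eq_of_heq ((cast_heq _ _).trans (heq_of_eq (F.mul_one x)))).symm
      | cons q1 l1 =>
        obtain ⟨a, y, e1, hx1⟩ := H 1 le_rfl (by simp)
        have hxy : HEq x (F.mul a y) := (heq_of_eq hx1).trans (cast_heq _ _)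
        have key : ∀ k, 1 ≤ k → k < (q1 :: l1).length →
            y ∈ F.splitSet (q1 :: l1).sum (((q1 :: l1).take k).sum)
              (((q1 :: l1).drop k).sum) := by
          intro k hk1 hk2
          have hst : ((q1 :: l1).take k).sum + ((q1 :: l1).drop k).sum
              = (q1 :: l1).sum := List.sum_take_add_sum_drop _ _
          obtain ⟨c, d, e2, hx2⟩ := H (k+1) (by omega) (by simp at hk2 ⊢; omega)
          have hxcd : HEq x (F.mul c d) := (heq_of_eq hx2).trans (cast_heq _ _)
          have e3 : q + ((q1 :: l1).take k).sum + ((q1 :: l1).drop k).sum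
              = (q :: q1 :: l1).sum := by
            rw [Nat.add_assoc, hst]; rfl
          have hx0x : HEq (cast (congrArg F.G e3.symm) x) x := cast_heq _ _
          have h1 : ∃ (A : F.G (q + ((q1 :: l1).take k).sum))
              (B : F.G (((q1 :: l1).drop k).sum)),
              cast (congrArg F.G e3.symm) x = F.mul A B :=
            ⟨c, d, eq_of_heq (hx0x.trans hxcd)⟩
          have h2 : ∃ (C : F.G q) (D : F.G (((q1 :: l1).take k).sum
              + ((q1 :: l1).drop k).sum)),
              HEq (cast (congrArg F.G e3.symm) x) (F.mul C D) :=
            ⟨a, cast (congrArg F.G hst.symm) y,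
              hx0x.trans (hxy.trans
                (F.hmul_congr rfl hst.symm (HEq.refl a) (cast_heq _ _).symm))⟩
          obtain ⟨A, B, C, hABC⟩ := F.hinter h1 h2
          have h4 : HEq (F.mul a y) (F.mul A (F.mul B C)) :=
            hxy.symm.trans (hx0x.symm.trans ((heq_of_eq hABC).trans (F.assoc A B C)))
          have h5 := F.hinj (rfl : ((q :: q1 :: l1).take 1).sum = q) hst.symm h4
          exact ⟨B, C, hst, eq_of_heq (h5.2.trans (cast_heq _ _).symm)⟩
        have hy : y ∈ F.iterMulSet (q1 :: l1) := (ih y).mp key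
        exact ⟨a, y, rfl, hy, eq_of_heq (hxy.trans (cast_heq _ _).symm)⟩
    · intro hx k hk1 hk2
      obtain ⟨A, B, h⟩ := F.split_of_iter (q :: l) k x hx
      exact ⟨A, B, List.sum_take_add_sum_drop _ _,
        eq_of_heq (h.trans (cast_heq _ _).symm)⟩

end GroupFamily

/-- for `q₀, ..., q_{r+1} ≥ 1` with `q₀ + ⋯ + q_{r+1} = n`, the intersection
over `i = 0, ..., r` of the subgroups `G (q₀+⋯+q_i) × G (q_{i+1}+⋯+q_{r+1})` of `G n`
equals `G q₀ × G q₁ × ⋯ × G q_{r+1}`. -/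
theorem stmt_15 (F : GroupFamily.{u}) (n : ℕ) (hn : 2 ≤ n) (l : List ℕ)
    (hlen : 2 ≤ l.length) (hpos : ∀ q ∈ l, 1 ≤ q) (hsum : l.sum = n) (x : F.G n) :
    (∀ k, 1 ≤ k → k < l.length →
        x ∈ F.splitSet n ((l.take k).sum) ((l.drop k).sum)) ↔
      ∃ y ∈ F.iterMulSet l, x = cast (congrArg F.G hsum) y := by
  subst hsum
  rw [F.main l x]
  constructor
  · intro h
    exact ⟨x, h, rfl⟩
  · rintro ⟨y, hy, rfl⟩
    exact hy
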